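/- arXiv:1103.1980 — 2 statements merged into one kernel-verified Lean document; each statement's English description precedes it below -/
import Mathlib

section
/- Let p⁰,...,pⁿ be points of the standard n-simplex and ψ a map from the simplex to itself such that: (a) p^i_i > ψ_i(p^i) for each i; (b) |p^i_j − p^0_j| < δ for all i,j; (c) |ψ_j(p^i) − ψ_j(p^0)| < ε/(2n(n+1)) for all i,j, where δ < ε/(2n(n+1)). Then |p^0_i − ψ_i(p^0)| < ε/(n+1) for every coordinate i, and hence max_i |p^0_i − ψ_i(p^0)| < ε. -/
theorem fully_labeled_simplex_approx_fixed_point {n : ℕ} (hn : 1 ≤ n)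
    (ε δ : ℝ) (hε : 0 < ε) (hδ : 0 < δ)
    (hδε : δ < ε / (2 * n * (n + 1)))
    (p : Fin (n + 1) → (Fin (n + 1) → ℝ))
    (hp : ∀ i, p i ∈ stdSimplex ℝ (Fin (n + 1)))
    (ψ : (Fin (n + 1) → ℝ) → (Fin (n + 1) → ℝ))
    (hψ : ∀ x ∈ stdSimplex ℝ (Fin (n + 1)), ψ x ∈ stdSimplex ℝ (Fin (n + 1)))
    (ha : ∀ i, ψ (p i) i < p i i)
    (hb : ∀ i j, |p i j - p 0 j| < δ)
    (hc : ∀ i j, |ψ (p i) j - ψ (p 0) j| < ε / (2 * n * (n + 1))) :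
    (∀ i, |p 0 i - ψ (p 0) i| < ε / (n + 1)) ∧
    (∀ i, |p 0 i - ψ (p 0) i| < ε) := by
  have hn0 : (1:ℝ) ≤ n := by exact_mod_cast hn
  set c := ε / (2 * n * (n + 1)) with hc_def
  have hcpos : 0 < c := by
    apply div_pos hε; positivity
  have hcn : 2 * c * n = ε / (n + 1) := by
    rw [hc_def]; field_simp
  have key : ∀ i, -(2*c) < p 0 i - ψ (p 0) i := by
    intro i
    have h1 := abs_lt.mp (hc i i)
    have h2 := ha i
    have h3 := abs_lt.mp (hb i i)
    linarith [h1.1, h1.2, h3.1, h3.2, hδε]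
  have hsum : ∑ i, (p 0 i - ψ (p 0) i) = 0 := by
    have e1 := (hp 0).2
    have e2 := (hψ (p 0) (hp 0)).2
    rw [Finset.sum_sub_distrib, e1, e2, sub_self]
  have main : ∀ i, |p 0 i - ψ (p 0) i| < ε / (n + 1) := by
    intro i
    have hlow := key i
    have hcard : (Finset.univ.erase i).card = n := by
      simp [Finset.card_erase_of_mem]
    have hne : (Finset.univ.erase i).Nonempty := by
      rw [← Finset.card_pos, hcard]; exact hn
    have hrest : (n:ℝ) * (-(2*c)) < ∑ j ∈ Finset.univ.erase i, (p 0 j - ψ (p 0) j) := by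
      calc (n:ℝ) * (-(2*c)) = ∑ _j ∈ Finset.univ.erase i, (-(2*c)) := by
            rw [Finset.sum_const, hcard]; push_cast; ring
        _ < _ := Finset.sum_lt_sum_of_nonempty hne (fun j _ => key j)
    have hsplit : (p 0 i - ψ (p 0) i) + ∑ j ∈ Finset.univ.erase i, (p 0 j - ψ (p 0) j) = 0 := by
      have := Finset.add_sum_erase Finset.univ (fun j => p 0 j - ψ (p 0) j) (Finset.mem_univ i)
      rw [this, hsum]
    have hup : p 0 i - ψ (p 0) i < ε / (n + 1) := by nlinarith
    have hlow2 : -(ε / (n + 1)) < p 0 i - ψ (p 0) i := by nlinarith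
    exact abs_lt.mpr ⟨hlow2, hup⟩
  refine ⟨main, fun i => lt_of_lt_of_le (main i) ?_⟩
  rw [div_le_iff₀ (by positivity)]
  nlinarith
end

section
/- A mixed-strategy profile p̃ is a fixed point of the Nash map ψ if and only if max(π_i(s_ij, p̃_{−i}) − π_i(p̃), 0) = 0 for every player i and every pure strategy s_ij, i.e., p̃ is a Nash equilibrium. In particular, if ψ(p̃) = p̃ then no player has a pure strategy yielding a payoff strictly greater than π_i(p̃). -/
/-- A mixed-strategy profile `p` is a fixed point of the Nash map `ψ` iff
`max (π_i(s_ij, p_{-i}) - π_i(p)) 0 = 0` for every player `i` and pure strategy `j`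
(i.e. `p` is a Nash equilibrium); in particular a fixed point gives no player a
pure strategy with payoff exceeding the expected payoff. Here `u i j = π_i(s_ij, p_{-i})`
and `π i = π_i(p) = ∑ j, p i j * u i j`. -/
theorem nash_map_fixed_point_iff_equilibrium {n m : ℕ}
    (p : Fin n → Fin m → ℝ) (hp : ∀ i, p i ∈ stdSimplex ℝ (Fin m))
    (u : Fin n → Fin m → ℝ)
    (π : Fin n → ℝ) (hπ : ∀ i, π i = ∑ j, p i j * u i j)
    (ψ : Fin n → Fin m → ℝ)
    (hψ : ∀ i j, ψ i j =
      (p i j + max (u i j - π i) 0) / (1 + ∑ k, max (u i k - π i) 0)) :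
    ((∀ i j, ψ i j = p i j) ↔ (∀ i j, max (u i j - π i) 0 = 0)) ∧
    ((∀ i j, ψ i j = p i j) → ∀ i j, u i j ≤ π i) := by
  have main : (∀ i j, ψ i j = p i j) → (∀ i j, max (u i j - π i) 0 = 0) := by
    intro hfix i
    set g : Fin m → ℝ := fun k => max (u i k - π i) 0 with hg
    have hgnn : ∀ k, 0 ≤ g k := fun k => le_max_right _ _
    set S : ℝ := ∑ k, g k with hS
    have hSnn : 0 ≤ S := Finset.sum_nonneg fun k _ => hgnn k
    have h1S : (0:ℝ) < 1 + S := by linarith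
    have heq : ∀ k, g k = p i k * S := by
      intro k
      have h := hfix i k
      rw [hψ i k] at h
      have h' : p i k + g k = p i k * (1 + S) := by
        field_simp at h
        linarith [h]
      linarith [h']
    have hps : ∑ k, p i k = 1 := (hp i).2
    have hsum0 : ∑ k, g k * (u i k - π i) = 0 := by
      have : ∑ k, g k * (u i k - π i)
          = S * (∑ k, p i k * u i k) - S * π i * (∑ k, p i k) := by
        rw [Finset.mul_sum, Finset.mul_sum, ← Finset.sum_sub_distrib]
        refine Finset.sum_congr rfl fun k _ => ?_
        rw [heq k]; ring
      rw [this, ← hπ i, hps]; ring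
    have hsq : ∑ k, (g k)^2 = 0 := by
      rw [← hsum0]
      refine Finset.sum_congr rfl fun k _ => ?_
      rcases le_or_gt (u i k - π i) 0 with h | h
      · have : g k = 0 := by simp [hg, max_eq_right h]
        rw [this]; ring
      · have : g k = u i k - π i := max_eq_left h.le
        rw [this]; ring
    intro j
    have := (Finset.sum_eq_zero_iff_of_nonneg (fun k _ => sq_nonneg (g k))).mp hsq j
      (Finset.mem_univ j)
    exact pow_eq_zero_iff (by norm_num) |>.mp this
  refine ⟨⟨main, ?_⟩, fun hfix i j => ?_⟩
  · intro h i j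
    rw [hψ i j]
    have hz : ∀ k, max (u i k - π i) 0 = 0 := h i
    simp [hz]
  · have := main hfix i j
    have : u i j - π i ≤ 0 := by
      by_contra hc
      push_neg at hc
      rw [max_eq_left hc.le] at this
      linarith
    linarith
end
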